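/- The function ee(p) = W·log₂(1 + p·γ) / (p/ς + p_c) has a unique stationary point on (0, ∞), i.e., there is a unique p* > 0 with (W·γ/((1+p*γ)·ln 2))·(p*/ς + p_c) = W·log₂(1+p*γ)/ς, and this p* is the unique global maximizer of ee on [0, ∞). -/

import Mathlib

noncomputable def ee (W γ ς pc p : ℝ) : ℝ :=
  W * Real.logb 2 (1 + p * γ) / (p / ς + pc)

noncomputable def Faux (γ c p : ℝ) : ℝ := γ * (p + c) / (1 + p * γ) - Real.log (1 + p * γ)

noncomputable def Haux (γ c p : ℝ) : ℝ := Real.log (1 + p * γ) / (p + c)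

lemma hasDerivAt_Faux {γ c p : ℝ} (hx : 0 < 1 + p * γ) :
    HasDerivAt (Faux γ c) (-γ^2 * (c + p) / (1 + p * γ)^2) p := by
  have h1 : HasDerivAt (fun p : ℝ => 1 + p * γ) γ p := by
    simpa using ((hasDerivAt_id p).mul_const γ).const_add 1
  have h2 : HasDerivAt (fun p : ℝ => γ * (p + c)) γ p := by
    simpa using ((hasDerivAt_id p).add_const c).const_mul γ
  have h3 := (h2.div h1 hx.ne').sub (h1.log hx.ne')
  refine h3.congr_deriv ?_
  field_simp
  ring

lemma hasDerivAt_Haux {γ c p : ℝ} (hx : 0 < 1 + p * γ) (hpc : 0 < p + c) :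
    HasDerivAt (Haux γ c) (Faux γ c p / (p + c)^2) p := by
  have h1 : HasDerivAt (fun p : ℝ => 1 + p * γ) γ p := by
    simpa using ((hasDerivAt_id p).mul_const γ).const_add 1
  have h4 : HasDerivAt (fun p : ℝ => p + c) 1 p := (hasDerivAt_id p).add_const c
  have h3 := (h1.log hx.ne').div h4 hpc.ne'
  refine h3.congr_deriv ?_
  unfold Faux
  field_simp

lemma Faux_strictAnti {γ c : ℝ} (hγ : 0 < γ) (hc : 0 < c) :
    StrictAntiOn (Faux γ c) (Set.Ici 0) := by
  have hx : ∀ x : ℝ, 0 ≤ x → 0 < 1 + x * γ := fun x hx => by nlinarith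
  apply strictAntiOn_of_deriv_neg (convex_Ici 0)
  · exact fun x hxm => (hasDerivAt_Faux (hx x hxm)).continuousAt.continuousWithinAt
  · intro x hxm
    rw [interior_Ici] at hxm
    have hx' := hx x hxm.le
    rw [(hasDerivAt_Faux hx').deriv]
    have hx0 : (0:ℝ) < x := hxm
    apply div_neg_of_neg_of_pos
    · have h : 0 < γ^2 * (c + x) := by positivity
      linarith
    · exact pow_pos hx' 2

lemma Faux_exists_root {γ c : ℝ} (hγ : 0 < γ) (hc : 0 < c) :
    ∃ p : ℝ, 0 < p ∧ Faux γ c p = 0 := by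
  set M := Real.exp (1 + γ * c) / γ with hM
  have hMpos : 0 < M := by positivity
  have hxM : 0 < 1 + M * γ := by nlinarith
  have hF0 : Faux γ c 0 = γ * c := by simp [Faux]
  have hlog : 1 + γ * c < Real.log (1 + M * γ) := by
    have : Real.exp (1 + γ * c) < 1 + M * γ := by
      rw [hM]; field_simp; linarith
    calc 1 + γ * c = Real.log (Real.exp (1 + γ * c)) := (Real.log_exp _).symm
    _ < _ := Real.log_lt_log (Real.exp_pos _) this
  have hrat : γ * (M + c) / (1 + M * γ) ≤ 1 + γ * c := by
    rw [div_le_iff₀ hxM]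
    nlinarith [mul_pos (mul_pos (mul_pos hγ hγ) hc) hMpos]
  have hFM : Faux γ c M < 0 := by
    unfold Faux; linarith
  have hcont : ContinuousOn (Faux γ c) (Set.Icc 0 M) := by
    intro x hxm
    have : 0 < 1 + x * γ := by nlinarith [hxm.1]
    exact (hasDerivAt_Faux this).continuousAt.continuousWithinAt
  have h0 : (0:ℝ) ∈ Set.Ioo (Faux γ c M) (Faux γ c 0) := ⟨hFM, by rw [hF0]; positivity⟩
  obtain ⟨p, hp, hfp⟩ := intermediate_value_Ioo' hMpos.le hcont h0
  exact ⟨p, hp.1, hfp⟩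

theorem ee_unique_stationary_point (W γ ς pc : ℝ) (hW : 0 < W) (hγ : 0 < γ)
    (hς : 0 < ς) (hς1 : ς ≤ 1) (hpc : 0 < pc) :
    (∃! p : ℝ, 0 < p ∧
        (W * γ / ((1 + p * γ) * Real.log 2)) * (p / ς + pc)
          = W * Real.logb 2 (1 + p * γ) / ς) ∧
    (∀ p : ℝ,
        (0 < p ∧
          (W * γ / ((1 + p * γ) * Real.log 2)) * (p / ς + pc)
            = W * Real.logb 2 (1 + p * γ) / ς) →
        ∀ q ∈ Set.Ici (0 : ℝ), q ≠ p → ee W γ ς pc q < ee W γ ς pc p) := by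
  set c := ς * pc with hcdef
  have hc : 0 < c := by positivity
  have hL : (0:ℝ) < Real.log 2 := Real.log_pos (by norm_num)
  have hxpos : ∀ x : ℝ, 0 ≤ x → 0 < 1 + x * γ := fun x hx => by nlinarith
  -- equivalence of stationarity and Faux = 0
  have stat_iff : ∀ p : ℝ, 0 < p →
      (((W * γ / ((1 + p * γ) * Real.log 2)) * (p / ς + pc)
          = W * Real.logb 2 (1 + p * γ) / ς) ↔ Faux γ c p = 0) := by
    intro p hp
    have hx := hxpos p hp.le
    have key : (W * γ / ((1 + p * γ) * Real.log 2)) * (p / ς + pc)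
          - W * Real.logb 2 (1 + p * γ) / ς
        = (W / (Real.log 2 * ς * (1 + p * γ)))
          * (γ * (p + ς * pc) - Real.log (1 + p * γ) * (1 + p * γ)) := by
      rw [Real.logb]
      field_simp
    have key2 : Faux γ c p
        = (γ * (p + ς * pc) - Real.log (1 + p * γ) * (1 + p * γ)) / (1 + p * γ) := by
      unfold Faux
      rw [hcdef]
      field_simp
    have hWn : W / (Real.log 2 * ς * (1 + p * γ)) ≠ 0 := by positivity
    have hiff1 : ((W * γ / ((1 + p * γ) * Real.log 2)) * (p / ς + pc)
          = W * Real.logb 2 (1 + p * γ) / ς)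
        ↔ γ * (p + ς * pc) - Real.log (1 + p * γ) * (1 + p * γ) = 0 := by
      rw [← sub_eq_zero, key, mul_eq_zero, or_iff_right hWn]
    have hiff2 : Faux γ c p = 0
        ↔ γ * (p + ς * pc) - Real.log (1 + p * γ) * (1 + p * γ) = 0 := by
      rw [key2, div_eq_zero_iff, or_iff_left hx.ne']
    exact hiff1.trans hiff2.symm
  -- relation ee and Haux
  have ee_eq : ∀ q : ℝ, 0 ≤ q → ee W γ ς pc q = (W * ς / Real.log 2) * Haux γ c q := by
    intro q hq
    have hqc : 0 < q + c := by positivity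
    unfold ee Haux
    rw [Real.logb, hcdef]
    have hd : q / ς + pc = (q + ς * pc) / ς := by field_simp
    rw [hd]
    field_simp
  obtain ⟨ps, hps, hFps⟩ := Faux_exists_root hγ hc
  have hanti := Faux_strictAnti hγ hc
  -- maximizer property
  have hmax : ∀ p : ℝ, 0 < p → Faux γ c p = 0 →
      ∀ q ∈ Set.Ici (0:ℝ), q ≠ p → ee W γ ς pc q < ee W γ ς pc p := by
    intro p hp hFp q hq hne
    have hq0 : (0:ℝ) ≤ q := hq
    rw [ee_eq q hq0, ee_eq p hp.le]
    have hcoef : 0 < W * ς / Real.log 2 := by positivity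
    apply mul_lt_mul_of_pos_left _ hcoef
    rcases lt_or_gt_of_ne hne with hlt | hgt
    · -- q < p : H strictly increasing on Icc 0 p
      have hmono : StrictMonoOn (Haux γ c) (Set.Icc 0 p) := by
        apply strictMonoOn_of_deriv_pos (convex_Icc 0 p)
        · intro x hx
          have h1 := hxpos x hx.1
          have h2 : 0 < x + c := by have := hx.1; positivity
          exact (hasDerivAt_Haux h1 h2).continuousAt.continuousWithinAt
        · intro x hx
          rw [interior_Icc] at hx
          have h1 := hxpos x hx.1.le
          have h2 : 0 < x + c := by have := hx.1; positivity
          rw [(hasDerivAt_Haux h1 h2).deriv]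
          apply div_pos _ (pow_pos h2 2)
          have := hanti (Set.mem_Ici.mpr hx.1.le) (Set.mem_Ici.mpr hp.le) hx.2
          linarith [hFp ▸ this]
      exact hmono ⟨hq0, hlt.le⟩ ⟨hp.le, le_refl p⟩ hlt
    · -- q > p : H strictly decreasing on Ici p
      have hmono : StrictAntiOn (Haux γ c) (Set.Ici p) := by
        apply strictAntiOn_of_deriv_neg (convex_Ici p)
        · intro x hx
          have hx0 : (0:ℝ) ≤ x := le_trans hp.le hx
          have h1 := hxpos x hx0
          have h2 : 0 < x + c := by positivity
          exact (hasDerivAt_Haux h1 h2).continuousAt.continuousWithinAt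
        · intro x hx
          rw [interior_Ici] at hx
          have hx0 : (0:ℝ) ≤ x := le_trans hp.le hx.le
          have h1 := hxpos x hx0
          have h2 : 0 < x + c := by positivity
          rw [(hasDerivAt_Haux h1 h2).deriv]
          apply div_neg_of_neg_of_pos _ (pow_pos h2 2)
          have := hanti (Set.mem_Ici.mpr hp.le) (Set.mem_Ici.mpr hx0) hx
          linarith [hFp ▸ this]
      exact hmono (Set.mem_Ici.mpr (le_refl p)) (Set.mem_Ici.mpr hgt.le) hgt
  constructor
  · refine ⟨ps, ⟨hps, (stat_iff ps hps).mpr hFps⟩, ?_⟩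
    intro y ⟨hy, hstat⟩
    have hFy : Faux γ c y = 0 := (stat_iff y hy).mp hstat
    exact hanti.injOn (Set.mem_Ici.mpr hy.le) (Set.mem_Ici.mpr hps.le) (by rw [hFy, hFps])
  · intro p ⟨hp, hstat⟩
    exact hmax p hp ((stat_iff p hp).mp hstat)
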